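/- The improper integral ∫_0^∞ t·sin²((t-1)π/2)/(t²-1)² dt converges and equals -1/2 + (π/4)·Si(π), where Si(x) = ∫_0^x (sin u)/u du is the sine integral. -/

import Mathlib

open MeasureTheory Real Filter Set Topology intervalIntegral

/-- The sine integral `Si(x) = ∫_0^x (sin u)/u du`. -/
noncomputable def sineIntegral (x : ℝ) : ℝ := ∫ u in (0 : ℝ)..x, Real.sin u / u


lemma sdu_intervalIntegrable (a b : ℝ) :
    IntervalIntegrable (fun u => Real.sin u / u) volume a b := by
  rw [intervalIntegrable_iff]
  haveI : IsFiniteMeasure (volume.restrict (Set.uIoc a b)) := by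
    refine ⟨?_⟩
    rw [Measure.restrict_apply_univ]
    exact measure_Ioc_lt_top
  apply Integrable.mono' (g := fun _ => (1:ℝ)) (integrable_const 1)
  · exact (Real.measurable_sin.div measurable_id).aestronglyMeasurable
  · filter_upwards with u
    rcases eq_or_ne u 0 with rfl | hu
    · simp
    · rw [norm_div, Real.norm_eq_abs, Real.norm_eq_abs, div_le_one (abs_pos.mpr hu)]
      exact Real.abs_sin_le_abs

lemma continuous_sineIntegral : Continuous sineIntegral :=
  intervalIntegral.continuous_primitive sdu_intervalIntegrable 0

lemma hasDerivAt_sineIntegral {x : ℝ} (hx : x ≠ 0) :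
    HasDerivAt sineIntegral (Real.sin x / x) x := by
  apply intervalIntegral.integral_hasDerivAt_right (sdu_intervalIntegrable 0 x)
  · exact (Real.measurable_sin.div measurable_id).aestronglyMeasurable.stronglyMeasurableAtFilter
  · exact (Real.continuous_sin.continuousAt.div continuousAt_id hx)



lemma sineIntegral_neg (x : ℝ) : sineIntegral (-x) = -sineIntegral x := by
  have h : ∀ u : ℝ, Real.sin (-u) / (-u) = Real.sin u / u := by
    intro u; rw [Real.sin_neg, neg_div_neg_eq]
  have := intervalIntegral.integral_comp_neg (a := (0:ℝ)) (b := -x)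
    (fun u => Real.sin u / u)
  simp only [h, neg_zero, neg_neg] at this
  unfold sineIntegral
  rw [this, intervalIntegral.integral_symm]

lemma integrableOn_cos_div_sq : IntegrableOn (fun u : ℝ => Real.cos u / u ^ 2) (Ioi 1) := by
  apply Integrable.mono' (g := fun u : ℝ => u ^ (-2 : ℝ))
    (integrableOn_Ioi_rpow_of_lt (by norm_num) one_pos)
  · exact ((Real.measurable_cos.div (measurable_id.pow_const 2)).aestronglyMeasurable)
  · filter_upwards [ae_restrict_mem measurableSet_Ioi] with u hu
    have hu1 : (1:ℝ) < u := hu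
    have hu0 : (0:ℝ) < u := by linarith
    rw [Real.norm_eq_abs, abs_div, Real.rpow_neg hu0.le, Real.rpow_two]
    rw [abs_of_nonneg (by positivity : (0:ℝ) ≤ u ^ 2)]
    apply div_le_of_le_mul₀ (by positivity) (by positivity)
    calc |Real.cos u| ≤ 1 := Real.abs_cos_le_one u
    _ ≤ (u^2)⁻¹ * u^2 := by rw [inv_mul_cancel₀ (by positivity)]

noncomputable def SiLim : ℝ :=
  sineIntegral 1 + Real.cos 1 - ∫ u in Ioi (1:ℝ), Real.cos u / u ^ 2

lemma tendsto_sineIntegral_atTop : Tendsto sineIntegral atTop (𝓝 SiLim) := by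
  have key : ∀ x : ℝ, 1 ≤ x → sineIntegral x =
      sineIntegral 1 + Real.cos 1 - Real.cos x / x - ∫ u in (1:ℝ)..x, Real.cos u / u ^ 2 := by
    intro x hx
    have hpos : ∀ u ∈ uIcc (1:ℝ) x, (0:ℝ) < u := by
      intro u hu
      rcases hu with ⟨h1, _⟩
      rw [min_def] at h1
      split_ifs at h1 <;> linarith
    have hcont : ContinuousOn (fun u : ℝ => Real.cos u / u ^ 2) (uIcc 1 x) := by
      apply ContinuousOn.div Real.continuous_cos.continuousOn (by fun_prop)
      intro u hu; exact pow_ne_zero 2 (hpos u hu).ne'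
    have hci : IntervalIntegrable (fun u : ℝ => Real.cos u / u ^ 2) volume 1 x :=
      hcont.intervalIntegrable
    have hftc : ∫ u in (1:ℝ)..x, (Real.sin u / u + Real.cos u / u ^ 2) =
        (-Real.cos x / x) - (-Real.cos 1 / 1) := by
      apply intervalIntegral.integral_eq_sub_of_hasDerivAt
      · intro u hu
        have hu0 : u ≠ 0 := (hpos u hu).ne'
        have : HasDerivAt (fun u : ℝ => -Real.cos u / u)
            ((Real.sin u * u - (-Real.cos u) * 1) / u ^ 2) u := by
          simpa [Pi.div_def, Pi.neg_def] using ((Real.hasDerivAt_cos u).neg.div (hasDerivAt_id u) hu0)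
        refine this.congr_deriv ?_
        field_simp
        ring
      · exact (sdu_intervalIntegrable 1 x).add hci
    have hsum : ∫ u in (1:ℝ)..x, (Real.sin u / u + Real.cos u / u ^ 2) =
        (∫ u in (1:ℝ)..x, Real.sin u / u) + ∫ u in (1:ℝ)..x, Real.cos u / u ^ 2 :=
      intervalIntegral.integral_add (sdu_intervalIntegrable 1 x) hci
    have hsplit : sineIntegral x = sineIntegral 1 + ∫ u in (1:ℝ)..x, Real.sin u / u := by
      unfold sineIntegral
      rw [intervalIntegral.integral_add_adjacent_intervals (sdu_intervalIntegrable 0 1)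
        (sdu_intervalIntegrable 1 x)]
    rw [hsplit]
    have : (∫ u in (1:ℝ)..x, Real.sin u / u) =
        (-Real.cos x / x) - (-Real.cos 1 / 1) - ∫ u in (1:ℝ)..x, Real.cos u / u ^ 2 := by
      rw [← hftc, hsum]; ring
    rw [this]; ring
  have h1 : Tendsto (fun x : ℝ => sineIntegral 1 + Real.cos 1 - Real.cos x / x -
      ∫ u in (1:ℝ)..x, Real.cos u / u ^ 2) atTop (𝓝 SiLim) := by
    have hA : Tendsto (fun x : ℝ => Real.cos x / x) atTop (𝓝 0) := by
      apply squeeze_zero_norm' (a := fun x : ℝ => x⁻¹) ?_ tendsto_inv_atTop_zero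
      filter_upwards [eventually_ge_atTop (1:ℝ)] with x hx
      rw [Real.norm_eq_abs, abs_div, div_le_iff₀ (by rw [abs_of_pos] <;> linarith)]
      rw [abs_of_pos (by linarith : (0:ℝ) < x)]
      calc |Real.cos x| ≤ 1 := Real.abs_cos_le_one x
      _ ≤ x⁻¹ * x := by rw [inv_mul_cancel₀ (by linarith)]
    have hB : Tendsto (fun x : ℝ => ∫ u in (1:ℝ)..x, Real.cos u / u ^ 2) atTop
        (𝓝 (∫ u in Ioi (1:ℝ), Real.cos u / u ^ 2)) :=
      intervalIntegral_tendsto_integral_Ioi 1 integrableOn_cos_div_sq tendsto_id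
    unfold SiLim
    have := (((tendsto_const_nhds (x := sineIntegral 1 + Real.cos 1)).sub hA).sub hB)
    simpa using this
  apply h1.congr'
  filter_upwards [eventually_ge_atTop (1:ℝ)] with x hx
  exact (key x hx).symm


noncomputable def G (t : ℝ) : ℝ :=
  -(1 + Real.cos (Real.pi * t)) / (4 * (t ^ 2 - 1)) -
    Real.pi / 8 * (sineIntegral (Real.pi * (t + 1)) - sineIntegral (Real.pi * (t - 1)))

noncomputable def g (t : ℝ) : ℝ := t * Real.sin ((t - 1) * Real.pi / 2) ^ 2 / (t ^ 2 - 1) ^ 2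

lemma sin_sq_eq (t : ℝ) :
    Real.sin ((t - 1) * Real.pi / 2) ^ 2 = (1 + Real.cos (Real.pi * t)) / 2 := by
  have h1 : (t - 1) * Real.pi / 2 = t * Real.pi / 2 - Real.pi / 2 := by ring
  rw [h1, Real.sin_sub_pi_div_two, neg_pow, Real.cos_sq]
  have h2 : 2 * (t * Real.pi / 2) = Real.pi * t := by ring
  rw [h2]; ring

lemma hasDerivAt_G {t : ℝ} (ht : t ^ 2 - 1 ≠ 0) : HasDerivAt G (g t) t := by
  have htm : t - 1 ≠ 0 := fun h => ht (by rw [show t = 1 by linarith]; ring)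
  have htp : t + 1 ≠ 0 := fun h => ht (by rw [show t = -1 by linarith]; ring)
  have hπ : Real.pi ≠ 0 := Real.pi_ne_zero
  -- first term
  have h1 : HasDerivAt (fun s : ℝ => -(1 + Real.cos (Real.pi * s)))
      (Real.sin (Real.pi * t) * Real.pi) t := by
    have : HasDerivAt (fun s : ℝ => Real.pi * s) Real.pi t := by
      simpa using (hasDerivAt_id t).const_mul Real.pi
    simpa [Pi.neg_def] using ((this.cos).const_add 1).neg
  have h2 : HasDerivAt (fun s : ℝ => 4 * (s ^ 2 - 1)) (4 * (2 * t)) t := by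
    simpa using (((hasDerivAt_pow 2 t).sub_const 1).const_mul 4)
  have hden : 4 * (t ^ 2 - 1) ≠ 0 := by simpa using ht
  have hA := h1.div h2 hden
  -- second term
  have hip : HasDerivAt (fun s : ℝ => Real.pi * (s + 1)) Real.pi t := by
    simpa using ((hasDerivAt_id t).add_const 1).const_mul Real.pi
  have him : HasDerivAt (fun s : ℝ => Real.pi * (s - 1)) Real.pi t := by
    simpa using ((hasDerivAt_id t).sub_const 1).const_mul Real.pi
  have hsp : HasDerivAt (fun s : ℝ => sineIntegral (Real.pi * (s + 1)))
      (Real.sin (Real.pi * (t + 1)) / (Real.pi * (t + 1)) * Real.pi) t :=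
    by have := (hasDerivAt_sineIntegral (mul_ne_zero hπ htp)).comp t hip; exact this
  have hsm : HasDerivAt (fun s : ℝ => sineIntegral (Real.pi * (s - 1)))
      (Real.sin (Real.pi * (t - 1)) / (Real.pi * (t - 1)) * Real.pi) t :=
    by have := (hasDerivAt_sineIntegral (mul_ne_zero hπ htm)).comp t him; exact this
  have hB := ((hsp.sub hsm).const_mul (Real.pi / 8))
  have hG : HasDerivAt G _ t := hA.sub hB
  convert hG using 1
  rw [g, sin_sq_eq]
  have e1 : Real.pi * (t + 1) = Real.pi * t + Real.pi := by ring
  have e2 : Real.pi * (t - 1) = Real.pi * t - Real.pi := by ring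
  rw [e1, e2, Real.sin_add_pi, Real.sin_sub_pi]
  have hsq : (t ^ 2 - 1) ^ 2 ≠ 0 := pow_ne_zero 2 ht
  have hne1 : Real.pi * t + Real.pi ≠ 0 := by rw [← e1]; exact mul_ne_zero hπ htp
  have hne2 : Real.pi * t - Real.pi ≠ 0 := by rw [← e2]; exact mul_ne_zero hπ htm
  field_simp
  ring

lemma continuousAt_of_tendsto_compl {f : ℝ → ℝ} {x : ℝ}
    (h : Tendsto f (𝓝[≠] x) (𝓝 (f x))) : ContinuousAt f x := by
  rw [ContinuousAt, ← nhdsNE_sup_pure x, tendsto_sup]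
  exact ⟨h, tendsto_pure_nhds f x⟩

lemma continuousAt_G_one : ContinuousAt G 1 := by
  have hG2 : Continuous (fun t : ℝ =>
      Real.pi / 8 * (sineIntegral (Real.pi * (t + 1)) - sineIntegral (Real.pi * (t - 1)))) := by
    apply Continuous.mul continuous_const
    apply Continuous.sub
    · exact continuous_sineIntegral.comp (by fun_prop)
    · exact continuous_sineIntegral.comp (by fun_prop)
  have hG1 : ContinuousAt (fun t : ℝ => -(1 + Real.cos (Real.pi * t)) / (4 * (t ^ 2 - 1))) 1 := by
    apply continuousAt_of_tendsto_compl
    have hval : -(1 + Real.cos (Real.pi * 1)) / (4 * ((1:ℝ) ^ 2 - 1)) = 0 := by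
      simp [Real.cos_pi]
    rw [hval]
    -- slope of f t = 1 + cos (π t) at 1
    have hder : HasDerivAt (fun t : ℝ => 1 + Real.cos (Real.pi * t)) 0 1 := by
      have : HasDerivAt (fun s : ℝ => Real.pi * s) Real.pi 1 := by
        simpa using (hasDerivAt_id (1:ℝ)).const_mul Real.pi
      have h2 : HasDerivAt (fun t : ℝ => 1 + Real.cos (Real.pi * t)) _ 1 := (this.cos).const_add 1
      convert h2 using 1
      simp [Real.sin_pi]
    have hslope := hasDerivAt_iff_tendsto_slope.mp hder
    have hcont : Tendsto (fun t : ℝ => -((4 * (t + 1))⁻¹)) (𝓝[≠] 1) (𝓝 (-((4 * ((1:ℝ) + 1))⁻¹))) := by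
      apply Tendsto.mono_left _ nhdsWithin_le_nhds
      have : ContinuousAt (fun t : ℝ => -((4 * (t + 1))⁻¹)) 1 := by
        apply ContinuousAt.neg
        apply ContinuousAt.inv₀ (by fun_prop) (by norm_num)
      exact this.tendsto
    have hmul := hslope.mul hcont
    rw [zero_mul] at hmul
    apply hmul.congr'
    filter_upwards [self_mem_nhdsWithin,
      eventually_nhdsWithin_of_eventually_nhds
        (eventually_gt_nhds (by norm_num : (-1:ℝ) < 1))] with t ht1 htm1
    have h1 : t - 1 ≠ 0 := sub_ne_zero.mpr ht1
    have h2 : t + 1 ≠ 0 := by intro h; rw [show t = -1 by linarith] at htm1; linarith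
    rw [slope_def_field]
    have hc : (1 + Real.cos (Real.pi * 1)) = 0 := by simp [Real.cos_pi]
    rw [hc]
    have h3 : t ^ 2 - 1 ≠ 0 := by
      have : t ^ 2 - 1 = (t - 1) * (t + 1) := by ring
      rw [this]; exact mul_ne_zero h1 h2
    field_simp
    ring_nf
  have : G = fun t => -(1 + Real.cos (Real.pi * t)) / (4 * (t ^ 2 - 1)) -
      Real.pi / 8 * (sineIntegral (Real.pi * (t + 1)) - sineIntegral (Real.pi * (t - 1))) := rfl
  rw [this]
  exact hG1.sub hG2.continuousAt


lemma tendsto_G_atTop : Tendsto G atTop (𝓝 0) := by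
  have h1 : Tendsto (fun t : ℝ => -(1 + Real.cos (Real.pi * t)) / (4 * (t ^ 2 - 1)))
      atTop (𝓝 0) := by
    apply squeeze_zero_norm' (a := fun t : ℝ => t⁻¹)
    · filter_upwards [eventually_ge_atTop (2:ℝ)] with t ht
      have h2 : (0:ℝ) < t := by linarith
      have h3 : t ≤ 4 * (t ^ 2 - 1) := by nlinarith
      rw [Real.norm_eq_abs, abs_div, div_le_iff₀ (by rw [abs_of_pos (by nlinarith)]; nlinarith)]
      have hnum : |-(1 + Real.cos (Real.pi * t))| ≤ 2 := by
        rw [abs_neg]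
        have := Real.neg_one_le_cos (Real.pi * t)
        have := Real.cos_le_one (Real.pi * t)
        rw [abs_le]; constructor <;> linarith
      calc |-(1 + Real.cos (Real.pi * t))| ≤ 2 := hnum
      _ ≤ t⁻¹ * |4 * (t ^ 2 - 1)| := by
          rw [abs_of_pos (by nlinarith), le_inv_mul_iff₀ h2]
          nlinarith
    · exact tendsto_inv_atTop_zero
  have h2 : Tendsto (fun t : ℝ => Real.pi / 8 *
      (sineIntegral (Real.pi * (t + 1)) - sineIntegral (Real.pi * (t - 1)))) atTop (𝓝 0) := by
    have hp : Tendsto (fun t : ℝ => Real.pi * (t + 1)) atTop atTop :=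
      (tendsto_atTop_add_const_right _ 1 tendsto_id).const_mul_atTop Real.pi_pos
    have hm : Tendsto (fun t : ℝ => Real.pi * (t - 1)) atTop atTop :=
      (tendsto_atTop_add_const_right _ (-1) tendsto_id).const_mul_atTop Real.pi_pos
    have := ((tendsto_sineIntegral_atTop.comp hp).sub (tendsto_sineIntegral_atTop.comp hm)).const_mul (Real.pi / 8)
    simpa using this
  have h3 := h1.sub h2
  rw [sub_zero] at h3
  unfold G
  exact h3

lemma G_zero : G 0 = 1/2 - Real.pi / 4 * sineIntegral Real.pi := by
  unfold G
  have h1 : Real.pi * ((0:ℝ) + 1) = Real.pi := by ring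
  have h2 : Real.pi * ((0:ℝ) - 1) = -Real.pi := by ring
  rw [h1, h2, sineIntegral_neg Real.pi]
  norm_num [Real.cos_zero]
  ring

lemma g_measurable : Measurable g := by
  unfold g
  fun_prop

lemma g_bound {t : ℝ} (ht0 : 0 < t) (ht2 : t ≤ 2) : ‖g t‖ ≤ Real.pi ^ 2 := by
  rcases eq_or_ne t 1 with rfl | ht1
  · unfold g
    norm_num
    positivity
  · have h1 : t - 1 ≠ 0 := sub_ne_zero.mpr ht1
    have h2 : (0:ℝ) < t + 1 := by linarith
    have hd : (0:ℝ) < (t ^ 2 - 1) ^ 2 := by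
      have he : t ^ 2 - 1 = (t - 1) * (t + 1) := by ring
      have hne : t ^ 2 - 1 ≠ 0 := by rw [he]; exact mul_ne_zero h1 h2.ne'
      exact lt_of_le_of_ne (sq_nonneg _) (Ne.symm (pow_ne_zero 2 hne))
    have hg0 : 0 ≤ g t := by unfold g; positivity
    rw [Real.norm_eq_abs, abs_of_nonneg hg0]
    unfold g
    rw [div_le_iff₀ hd]
    have hs : Real.sin ((t - 1) * Real.pi / 2) ^ 2 ≤ ((t - 1) * Real.pi / 2) ^ 2 := by
      have := Real.abs_sin_le_abs (x := (t - 1) * Real.pi / 2)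
      calc Real.sin ((t - 1) * Real.pi / 2) ^ 2 = |Real.sin ((t - 1) * Real.pi / 2)| ^ 2 := (sq_abs _).symm
      _ ≤ |(t - 1) * Real.pi / 2| ^ 2 := by gcongr
      _ = ((t - 1) * Real.pi / 2) ^ 2 := sq_abs _
    have hs' : t * Real.sin ((t - 1) * Real.pi / 2) ^ 2 ≤ t * ((t - 1) * Real.pi / 2) ^ 2 :=
      mul_le_mul_of_nonneg_left hs ht0.le
    have h74 : (0:ℝ) ≤ (t + 1) ^ 2 - t / 4 := by nlinarith
    have key : t * ((t - 1) * Real.pi / 2) ^ 2 ≤ Real.pi ^ 2 * (t ^ 2 - 1) ^ 2 := by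
      nlinarith [mul_nonneg (mul_nonneg (sq_nonneg Real.pi) (sq_nonneg (t - 1))) h74]
    linarith

lemma g_bound' {t : ℝ} (ht : 2 < t) : ‖g t‖ ≤ 2 * t ^ (-3 : ℝ) := by
  have ht0 : (0:ℝ) < t := by linarith
  have ht4 : (4:ℝ) < t ^ 2 := by nlinarith [mul_pos (by linarith : (0:ℝ) < t - 2) (by linarith : (0:ℝ) < t + 2)]
  have hd : (0:ℝ) < (t ^ 2 - 1) ^ 2 := by nlinarith
  have hg0 : 0 ≤ g t := by unfold g; positivity
  rw [Real.norm_eq_abs, abs_of_nonneg hg0]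
  rw [Real.rpow_neg ht0.le, show (3:ℝ) = ((3:ℕ):ℝ) by norm_num, Real.rpow_natCast]
  unfold g
  rw [div_le_iff₀ hd]
  have hs : Real.sin ((t - 1) * Real.pi / 2) ^ 2 ≤ 1 := by
    rw [← sq_abs]
    have h1 := Real.abs_sin_le_one ((t - 1) * Real.pi / 2)
    nlinarith [abs_nonneg (Real.sin ((t - 1) * Real.pi / 2))]
  have hinv : (t ^ 3)⁻¹ * t ^ 3 = 1 := inv_mul_cancel₀ (by positivity)
  have key : t * 1 * t ^ 3 ≤ 2 * ((t ^ 2 - 1) ^ 2) := by nlinarith [sq_nonneg (t ^ 2 - 4), ht4]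
  calc t * Real.sin ((t - 1) * Real.pi / 2) ^ 2 ≤ t * 1 := by nlinarith
  _ = t * 1 * t ^ 3 * (t ^ 3)⁻¹ := by field_simp
  _ ≤ 2 * ((t ^ 2 - 1) ^ 2) * (t ^ 3)⁻¹ := by gcongr
  _ = 2 * (t ^ 3)⁻¹ * (t ^ 2 - 1) ^ 2 := by ring

lemma g_integrable : IntegrableOn g (Ioi 0) := by
  have h1 : IntegrableOn g (Ioc 0 2) := by
    haveI : IsFiniteMeasure (volume.restrict (Ioc (0:ℝ) 2)) := by
      refine ⟨?_⟩
      rw [Measure.restrict_apply_univ]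
      exact measure_Ioc_lt_top
    apply Integrable.mono' (g := fun _ => Real.pi ^ 2) (integrable_const _)
    · exact g_measurable.aestronglyMeasurable
    · filter_upwards [ae_restrict_mem measurableSet_Ioc] with t ht
      exact g_bound ht.1 ht.2
  have h2 : IntegrableOn g (Ioi 2) := by
    apply Integrable.mono' (g := fun t : ℝ => 2 * t ^ (-3 : ℝ))
      ((integrableOn_Ioi_rpow_of_lt (by norm_num) two_pos).const_mul 2)
    · exact g_measurable.aestronglyMeasurable
    · filter_upwards [ae_restrict_mem measurableSet_Ioi] with t ht
      exact g_bound' ht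
  have := h1.union h2
  rwa [Ioc_union_Ioi_eq_Ioi (by norm_num : (0:ℝ) ≤ 2)] at this

theorem stmt_1' :
    IntegrableOn
      (fun t : ℝ => t * Real.sin ((t - 1) * Real.pi / 2) ^ 2 / (t ^ 2 - 1) ^ 2)
      (Set.Ioi 0) ∧
    (∫ t in Set.Ioi (0 : ℝ),
        t * Real.sin ((t - 1) * Real.pi / 2) ^ 2 / (t ^ 2 - 1) ^ 2) =
      -1/2 + (Real.pi / 4) * sineIntegral Real.pi := by
  have hg_eq : (fun t : ℝ => t * Real.sin ((t - 1) * Real.pi / 2) ^ 2 / (t ^ 2 - 1) ^ 2) = g := rfl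
  rw [hg_eq]
  refine ⟨g_integrable, ?_⟩
  have hIoc : IntegrableOn g (Ioc 0 1) := g_integrable.mono_set Ioc_subset_Ioi_self
  have hIoi1 : IntegrableOn g (Ioi 1) := g_integrable.mono_set (Ioi_subset_Ioi zero_le_one)
  have hsplit : (∫ t in Ioi (0:ℝ), g t) = (∫ t in Ioc (0:ℝ) 1, g t) + ∫ t in Ioi (1:ℝ), g t := by
    rw [← setIntegral_union (Ioc_disjoint_Ioi le_rfl) measurableSet_Ioi hIoc hIoi1,
      Ioc_union_Ioi_eq_Ioi zero_le_one]
  have hA : (∫ t in Ioc (0:ℝ) 1, g t) = G 1 - G 0 := by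
    rw [← intervalIntegral.integral_of_le zero_le_one]
    apply intervalIntegral.integral_eq_sub_of_hasDeriv_right_of_le zero_le_one
    · intro x hx
      rcases eq_or_ne x 1 with rfl | hx1
      · exact continuousAt_G_one.continuousWithinAt
      · have hxlt : x < 1 := lt_of_le_of_ne hx.2 hx1
        have hne : x ^ 2 - 1 ≠ 0 := by nlinarith [hx.1, sq_nonneg x]
        exact (hasDerivAt_G hne).continuousAt.continuousWithinAt
    · intro x hx
      have hne : x ^ 2 - 1 ≠ 0 := by nlinarith [hx.1, hx.2]
      exact (hasDerivAt_G hne).hasDerivWithinAt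
    · rw [intervalIntegrable_iff_integrableOn_Ioc_of_le zero_le_one]
      exact hIoc
  have hB : (∫ t in Ioi (1:ℝ), g t) = 0 - G 1 := by
    apply integral_Ioi_of_hasDerivAt_of_tendsto continuousAt_G_one.continuousWithinAt
      _ hIoi1 tendsto_G_atTop
    intro x hx
    have hx1 : (1:ℝ) < x := hx
    have hne : x ^ 2 - 1 ≠ 0 := by nlinarith
    exact hasDerivAt_G hne
  rw [hsplit, hA, hB, G_zero]
  ring

/-- The improper integral `∫_0^∞ t·sin²((t-1)π/2)/(t²-1)² dt` converges and equals
`-1/2 + (π/4)·Si(π)`. -/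
theorem stmt_1 :
    IntegrableOn
      (fun t : ℝ => t * Real.sin ((t - 1) * Real.pi / 2) ^ 2 / (t ^ 2 - 1) ^ 2)
      (Set.Ioi 0) ∧
    (∫ t in Set.Ioi (0 : ℝ),
        t * Real.sin ((t - 1) * Real.pi / 2) ^ 2 / (t ^ 2 - 1) ^ 2) =
      -1/2 + (Real.pi / 4) * sineIntegral Real.pi := stmt_1'
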